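/- For every integer n ≥ 2, all i, j ∈ {1,…,n−1}, and all x, y ∈ B_n^{(i,j)} with x < y in the Bruhat order, there exists a bigrassmannian permutation w ∈ B_n \ B_n^{(i,j)} such that x < w < y in the Bruhat order. -/

import Mathlib

namespace Paper

/-- The simple transposition `s_i = (i, i+1)` (1-based) in `S_n`, realized as a
permutation of `Fin n`. For `i` outside `{1, …, n-1}` we set `s i = 1`. -/
def s (n i : ℕ) : Equiv.Perm (Fin n) :=
  if h : 1 ≤ i ∧ i < n then Equiv.swap ⟨i - 1, by omega⟩ ⟨i, by omega⟩ else 1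

/-- The length of a permutation: its number of inversions. -/
def len {n : ℕ} (w : Equiv.Perm (Fin n)) : ℕ :=
  (Finset.univ.filter (fun p : Fin n × Fin n => p.1 < p.2 ∧ w p.2 < w p.1)).card

/-- `i` is a left descent of `w` if `1 ≤ i ≤ n-1` and `ℓ(s_i w) < ℓ(w)`. -/
def IsLeftDescent {n : ℕ} (w : Equiv.Perm (Fin n)) (i : ℕ) : Prop :=
  1 ≤ i ∧ i ≤ n - 1 ∧ len (s n i * w) < len w

/-- `i` is a right descent of `w` if `1 ≤ i ≤ n-1` and `ℓ(w s_i) < ℓ(w)`. -/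
def IsRightDescent {n : ℕ} (w : Equiv.Perm (Fin n)) (i : ℕ) : Prop :=
  1 ≤ i ∧ i ≤ n - 1 ∧ len (w * s n i) < len w

/-- A permutation is bigrassmannian if it has exactly one left descent and
exactly one right descent. -/
def Bigrassmannian {n : ℕ} (w : Equiv.Perm (Fin n)) : Prop :=
  (∃! i, IsLeftDescent w i) ∧ (∃! j, IsRightDescent w j)

/-- One step of the Bruhat order: `w ⋖ t * w` for a transposition `t`
with `ℓ(w) < ℓ(t w)`. -/
def BruhatStep {n : ℕ} (w w' : Equiv.Perm (Fin n)) : Prop :=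
  ∃ a b : Fin n, a ≠ b ∧ w' = Equiv.swap a b * w ∧ len w < len w'

/-- The Bruhat order on `S_n`: the partial order generated by `w < tw` whenever
`t` is a transposition and `ℓ(w) < ℓ(tw)`. -/
def BruhatLE {n : ℕ} : Equiv.Perm (Fin n) → Equiv.Perm (Fin n) → Prop :=
  Relation.ReflTransGen BruhatStep

/-- Strict Bruhat order. -/
def BruhatLT {n : ℕ} (x y : Equiv.Perm (Fin n)) : Prop :=
  BruhatLE x y ∧ x ≠ y

/-- The product `s_a s_{a+1} ⋯ s_b` of consecutive simple transpositions. -/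
def ascRun (n a b : ℕ) : Equiv.Perm (Fin n) :=
  ((List.range (b + 1 - a)).map (fun t => s n (a + t))).prod

/-- For `i ≤ j`: `b(i,j,k) = (s_i ⋯ s_{j+k})(s_{i-1} ⋯ s_{j+k-1}) ⋯ (s_{i-k} ⋯ s_j)`. -/
def bAux (n i j k : ℕ) : Equiv.Perm (Fin n) :=
  ((List.range (k + 1)).map (fun m => ascRun n (i - m) (j + k - m))).prod

/-- The bigrassmannian permutation `b(i,j,k)`; for `j < i` it is `b(j,i,k)⁻¹`. -/
def b (n i j k : ℕ) : Equiv.Perm (Fin n) :=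
  if i ≤ j then bAux n i j k else (bAux n j i k)⁻¹

/-- The value `w(i)` of a permutation `w ∈ S_n` at `i ∈ {1, …, n}`, 1-based. -/
def act {n : ℕ} (w : Equiv.Perm (Fin n)) (i : ℕ) : ℕ :=
  if h : 1 ≤ i ∧ i ≤ n then ((w ⟨i - 1, by omega⟩ : Fin n) : ℕ) + 1 else i

/-- The essential set of a permutation `w ∈ S_n`. -/
def Ess {n : ℕ} (w : Equiv.Perm (Fin n)) : Set (ℕ × ℕ) :=
  {p | 1 ≤ p.1 ∧ p.1 ≤ n - 1 ∧ 1 ≤ p.2 ∧ p.2 ≤ n - 1 ∧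
    p.1 < act w⁻¹ p.2 ∧ p.2 < act w p.1 ∧
    act w (p.1 + 1) ≤ p.2 ∧ act w⁻¹ (p.2 + 1) ≤ p.1}

/-- The rank function `r_w(i,j) = |{k ≤ i : w(k) ≤ j}|` (1-based). -/
def rnk {n : ℕ} (w : Equiv.Perm (Fin n)) (i j : ℕ) : ℕ :=
  ((Finset.Icc 1 i).filter (fun k => act w k ≤ j)).card

/-- The co-rank function `t_w(i,j) = min{i,j} - r_w(i,j)`. -/
def cork {n : ℕ} (w : Equiv.Perm (Fin n)) (i j : ℕ) : ℕ :=
  min i j - rnk w i j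

/-- The set of bigrassmannian permutations `y ≤ w` in Bruhat order. -/
def BSet {n : ℕ} (w : Equiv.Perm (Fin n)) : Set (Equiv.Perm (Fin n)) :=
  {y | Bigrassmannian y ∧ BruhatLE y w}

/-- The set of Bruhat-maximal elements of `BSet w`. -/
def BM {n : ℕ} (w : Equiv.Perm (Fin n)) : Set (Equiv.Perm (Fin n)) :=
  {y ∈ BSet w | ∀ z ∈ BSet w, BruhatLE y z → z = y}


section Part1
variable {n : ℕ}

/-- value of `w` at 0-based position `p`, as a natural number. -/
def va (w : Equiv.Perm (Fin n)) (p : ℕ) : ℕ :=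
  if h : p < n then (w ⟨p, h⟩ : ℕ) else p

lemma va_lt (w : Equiv.Perm (Fin n)) {p : ℕ} (hp : p < n) : va w p < n := by
  simp only [va, dif_pos hp]; exact (w ⟨p, hp⟩).isLt

lemma va_inj (w : Equiv.Perm (Fin n)) {p q : ℕ} (hp : p < n) (hq : q < n)
    (h : va w p = va w q) : p = q := by
  simp only [va, dif_pos hp, dif_pos hq] at h
  have := w.injective (Fin.val_injective h)
  exact congrArg Fin.val this

lemma va_mk (w : Equiv.Perm (Fin n)) {p : ℕ} (hp : p < n) :
    w ⟨p, hp⟩ = ⟨va w p, va_lt w hp⟩ := by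
  simp only [va, dif_pos hp]

lemma va_inv_va (w : Equiv.Perm (Fin n)) {p : ℕ} (hp : p < n) :
    va w⁻¹ (va w p) = p := by
  simp only [va, dif_pos hp]
  have h2 : (↑(w ⟨p, hp⟩) : ℕ) < n := (w ⟨p, hp⟩).isLt
  simp only [dif_pos h2, Fin.eta, Equiv.Perm.inv_def, Equiv.symm_apply_apply]

end Part1
section Part2
variable {n : ℕ}

lemma len_mul_adjSwap (u : Equiv.Perm (Fin n)) {a b : Fin n} (hab : (a : ℕ) + 1 = (b : ℕ))
    (hasc : u a < u b) :
    len (u * Equiv.swap a b) = len u + 1 := by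
  have hAB : a < b := by rw [Fin.lt_def]; omega
  set σ := Equiv.swap a b with hσ
  set u' := u * σ with hu'
  have key : ∀ p q : Fin n, p < q → ¬(p = a ∧ q = b) → σ p < σ q := by
    intro p q hpq hne
    rw [Fin.lt_def] at hpq
    rw [Fin.lt_def]
    by_cases h1 : p = a
    · by_cases h2 : q = b
      · exact absurd ⟨h1, h2⟩ hne
      · have hq2 : (q : ℕ) ≠ (b : ℕ) := fun e => h2 (Fin.ext e)
        have hq1 : q ≠ a := fun e => by rw [h1, e] at hpq; omega
        rw [h1, Equiv.swap_apply_left, Equiv.swap_apply_of_ne_of_ne hq1 h2]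
        rw [h1] at hpq
        omega
    · by_cases h2 : p = b
      · have hq1 : q ≠ a := fun e => by
          rw [h2, e] at hpq; omega
        have hq2 : q ≠ b := fun e => by rw [h2, e] at hpq; omega
        rw [h2, Equiv.swap_apply_right, Equiv.swap_apply_of_ne_of_ne hq1 hq2]
        rw [h2] at hpq
        omega
      · rw [Equiv.swap_apply_of_ne_of_ne h1 h2]
        by_cases h3 : q = a
        · have hp1 : (p : ℕ) ≠ (a : ℕ) := fun e => h1 (Fin.ext e)
          rw [h3, Equiv.swap_apply_left]
          rw [h3] at hpq
          omega
        · by_cases h4 : q = b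
          · have hp1 : (p : ℕ) ≠ (a : ℕ) := fun e => h1 (Fin.ext e)
            rw [h4, Equiv.swap_apply_right]
            rw [h4] at hpq
            omega
          · rw [Equiv.swap_apply_of_ne_of_ne h3 h4]
            omega
  have hmemAB : (a, b) ∈ Finset.univ.filter
      (fun p : Fin n × Fin n => p.1 < p.2 ∧ u' p.2 < u' p.1) := by
    simp only [Finset.mem_filter, Finset.mem_univ, true_and]
    refine ⟨hAB, ?_⟩
    simp [hu', hσ, Equiv.swap_apply_left, Equiv.swap_apply_right, hasc]
  have hcard : ((Finset.univ.filter
      (fun p : Fin n × Fin n => p.1 < p.2 ∧ u' p.2 < u' p.1)).erase (a, b)).card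
      = (Finset.univ.filter
      (fun p : Fin n × Fin n => p.1 < p.2 ∧ u p.2 < u p.1)).card := by
    apply Finset.card_bij' (fun x _ => (σ x.1, σ x.2)) (fun x _ => (σ x.1, σ x.2))
    · intro x hx
      simp only [Finset.mem_erase, Finset.mem_filter, Finset.mem_univ, true_and] at hx
      obtain ⟨hne, hlt, hinv⟩ := hx
      simp only [Finset.mem_filter, Finset.mem_univ, true_and]
      constructor
      · apply key _ _ hlt
        intro ⟨e1, e2⟩
        exact hne (by rw [← e1, ← e2])
      · simpa [hu'] using hinv
    · intro x hx
      simp only [Finset.mem_filter, Finset.mem_univ, true_and] at hx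
      obtain ⟨hlt, hinv⟩ := hx
      have hane : ¬(x.1 = a ∧ x.2 = b) := by
        intro ⟨e1, e2⟩
        rw [e1, e2] at hinv
        exact absurd hasc (lt_asymm hinv)
      simp only [Finset.mem_erase, Finset.mem_filter, Finset.mem_univ, true_and]
      refine ⟨?_, key _ _ hlt hane, ?_⟩
      · intro hcontra
        have e1 : σ x.1 = a := congrArg Prod.fst hcontra
        have e2 : σ x.2 = b := congrArg Prod.snd hcontra
        have t1 : x.1 = σ a := by rw [← e1]; simp [hσ]
        have t2 : x.2 = σ b := by rw [← e2]; simp [hσ]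
        simp only [hσ, Equiv.swap_apply_left, Equiv.swap_apply_right] at t1 t2
        rw [t1, t2] at hlt
        exact absurd hAB (lt_asymm hlt)
      · simp only [hu', Equiv.Perm.mul_apply, hσ, Equiv.swap_apply_self]
        exact hinv
    · intro x _; simp [hσ]
    · intro x _; simp [hσ]
  have hfin : len u' = ((Finset.univ.filter
      (fun p : Fin n × Fin n => p.1 < p.2 ∧ u' p.2 < u' p.1)).erase (a, b)).card + 1 := by
    rw [Finset.card_erase_of_mem hmemAB]
    have : 0 < (Finset.univ.filter
      (fun p : Fin n × Fin n => p.1 < p.2 ∧ u' p.2 < u' p.1)).card :=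
      Finset.card_pos.mpr ⟨_, hmemAB⟩
    unfold len
    omega
  rw [show len (u * Equiv.swap a b) = len u' from rfl, hfin, hcard]
  rfl

end Part2
section Part3
variable {n : ℕ}

lemma va_fin_lt (u : Equiv.Perm (Fin n)) {p q : ℕ} (hp : p < n) (hq : q < n) :
    u ⟨p, hp⟩ < u ⟨q, hq⟩ ↔ va u p < va u q := by
  rw [Fin.lt_def]
  simp only [va, dif_pos hp, dif_pos hq]

lemma mul_swap_eq_swap_mul (u : Equiv.Perm (Fin n)) (a b : Fin n) :
    u * Equiv.swap a b = Equiv.swap (u a) (u b) * u := by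
  rw [Equiv.swap_apply_apply]
  simp [mul_assoc]

lemma bruhatStep_adjSwap (u : Equiv.Perm (Fin n)) {a b : Fin n} (hab : (a : ℕ) + 1 = (b : ℕ))
    (hasc : u a < u b) :
    BruhatStep u (u * Equiv.swap a b) := by
  refine ⟨u a, u b, ?_, ?_, ?_⟩
  · intro e
    have := u.injective e
    rw [this] at hab
    omega
  · rw [mul_swap_eq_swap_mul]
  · rw [len_mul_adjSwap u hab hasc]; omega

lemma va_mul_swap_left (u : Equiv.Perm (Fin n)) (a b : Fin n) :
    va (u * Equiv.swap a b) (a : ℕ) = va u (b : ℕ) := by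
  simp only [va, dif_pos a.isLt, dif_pos b.isLt, Equiv.Perm.mul_apply, Fin.eta,
    Equiv.swap_apply_left]

lemma va_mul_swap_right (u : Equiv.Perm (Fin n)) (a b : Fin n) :
    va (u * Equiv.swap a b) (b : ℕ) = va u (a : ℕ) := by
  simp only [va, dif_pos a.isLt, dif_pos b.isLt, Equiv.Perm.mul_apply, Fin.eta,
    Equiv.swap_apply_right]

lemma va_mul_swap_other (u : Equiv.Perm (Fin n)) (a b : Fin n) {m : ℕ}
    (hm1 : m ≠ (a : ℕ)) (hm2 : m ≠ (b : ℕ)) :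
    va (u * Equiv.swap a b) m = va u m := by
  by_cases hm : m < n
  · simp only [va, dif_pos hm, Equiv.Perm.mul_apply]
    rw [Equiv.swap_apply_of_ne_of_ne]
    · intro e; exact hm1 (congrArg Fin.val e)
    · intro e; exact hm2 (congrArg Fin.val e)
  · simp only [va, dif_neg hm]

/-- `s n m` for `1 ≤ m < n` is the adjacent swap at 0-based positions `m-1, m`. -/
lemma s_eq (m : ℕ) (h1 : 1 ≤ m) (h2 : m < n) :
    s n m = Equiv.swap ⟨m - 1, by omega⟩ ⟨m, h2⟩ := by
  unfold s
  rw [dif_pos ⟨h1, h2⟩]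

lemma rightDescent_iff (u : Equiv.Perm (Fin n)) (m : ℕ) (h1 : 1 ≤ m) (h2 : m < n) :
    IsRightDescent u m ↔ va u m < va u (m - 1) := by
  have hm1 : m - 1 < n := by omega
  have hab : ((⟨m - 1, hm1⟩ : Fin n) : ℕ) + 1 = ((⟨m, h2⟩ : Fin n) : ℕ) := by simp; omega
  constructor
  · intro ⟨_, _, hlt⟩
    by_contra hcon
    push_neg at hcon
    rcases lt_or_eq_of_le hcon with hlt2 | heq
    · have hasc : u ⟨m - 1, hm1⟩ < u ⟨m, h2⟩ := (va_fin_lt u hm1 h2).mpr hlt2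
      have := len_mul_adjSwap u hab hasc
      rw [s_eq m h1 h2] at hlt
      omega
    · have := va_inj u hm1 h2 heq
      omega
  · intro hdesc
    refine ⟨h1, by omega, ?_⟩
    rw [s_eq m h1 h2]
    set σ := Equiv.swap (⟨m - 1, hm1⟩ : Fin n) ⟨m, h2⟩ with hσ
    set u' := u * σ with hu'
    have hasc' : u' ⟨m - 1, hm1⟩ < u' ⟨m, h2⟩ := by
      rw [va_fin_lt u' hm1 h2]
      have e1 : va u' (m - 1) = va u m := va_mul_swap_left u ⟨m - 1, hm1⟩ ⟨m, h2⟩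
      have e2 : va u' m = va u (m - 1) := va_mul_swap_right u ⟨m - 1, hm1⟩ ⟨m, h2⟩
      omega
    have hlen := len_mul_adjSwap u' hab hasc'
    have huu : u' * σ = u := by rw [hu', hσ]; simp [mul_assoc]
    have hlen' : len u = len u' + 1 := by rw [← huu, hσ]; exact hlen
    omega

lemma notRightDescent_asc (u : Equiv.Perm (Fin n)) (m : ℕ) (h1 : 1 ≤ m) (h2 : m < n)
    (h : ¬ IsRightDescent u m) : va u (m - 1) < va u m := by
  rw [rightDescent_iff u m h1 h2] at h
  push_neg at h
  rcases lt_or_eq_of_le h with h' | h'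
  · exact h'
  · exact absurd (va_inj u (by omega) h2 h') (by omega)

lemma len_inv (u : Equiv.Perm (Fin n)) : len u⁻¹ = len u := by
  unfold len
  apply Finset.card_bij' (fun x _ => (u⁻¹ x.2, u⁻¹ x.1)) (fun x _ => (u x.2, u x.1))
  · intro x hx
    simp only [Finset.mem_filter, Finset.mem_univ, true_and] at hx ⊢
    refine ⟨hx.2, ?_⟩
    simpa using hx.1
  · intro x hx
    simp only [Finset.mem_filter, Finset.mem_univ, true_and] at hx ⊢
    refine ⟨hx.2, ?_⟩
    simpa using hx.1
  · intro x _; simp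
  · intro x _; simp

lemma s_inv (m : ℕ) : (s n m)⁻¹ = s n m := by
  unfold s
  split_ifs
  · exact Equiv.swap_inv _ _
  · rfl

lemma leftDescent_iff_inv (u : Equiv.Perm (Fin n)) (m : ℕ) :
    IsLeftDescent u m ↔ IsRightDescent u⁻¹ m := by
  unfold IsLeftDescent IsRightDescent
  have h : len (s n m * u) = len (u⁻¹ * s n m) := by
    rw [← len_inv (s n m * u), mul_inv_rev, s_inv]
  rw [h, len_inv]

lemma bruhatLE_len_le {u v : Equiv.Perm (Fin n)} (h : BruhatLE u v) : len u ≤ len v := by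
  induction h with
  | refl => exact le_rfl
  | tail _ hstep ih =>
      obtain ⟨a, b, _, _, hlen⟩ := hstep
      omega

lemma bruhatLT_len_lt {u v : Equiv.Perm (Fin n)} (h : BruhatLT u v) : len u < len v := by
  obtain ⟨hle, hne⟩ := h
  rcases Relation.ReflTransGen.cases_head hle with heq | ⟨w, hstep, hle2⟩
  · exact absurd heq hne
  · obtain ⟨a, b, _, _, hlen⟩ := hstep
    have := bruhatLE_len_le hle2
    omega

lemma bruhatStep_inv {u v : Equiv.Perm (Fin n)} (h : BruhatStep u v) :
    BruhatStep u⁻¹ v⁻¹ := by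
  obtain ⟨a, b, hab, heq, hlen⟩ := h
  refine ⟨u⁻¹ a, u⁻¹ b, fun e => hab (by simpa using congrArg u e), ?_, ?_⟩
  · rw [heq, mul_inv_rev, Equiv.swap_inv, Equiv.swap_apply_apply]
    simp [mul_assoc]
  · rw [len_inv, len_inv]; exact hlen

lemma bruhatLE_inv {u v : Equiv.Perm (Fin n)} (h : BruhatLE u v) : BruhatLE u⁻¹ v⁻¹ := by
  induction h with
  | refl => exact Relation.ReflTransGen.refl
  | tail _ hstep ih => exact Relation.ReflTransGen.tail ih (bruhatStep_inv hstep)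

lemma bruhatLT_inv {u v : Equiv.Perm (Fin n)} (h : BruhatLT u v) : BruhatLT u⁻¹ v⁻¹ :=
  ⟨bruhatLE_inv h.1, fun e => h.2 (by simpa using congrArg (fun z : Equiv.Perm (Fin n) => z⁻¹) e)⟩

end Part3
section Part4

def Xf (i j k p : ℕ) : ℕ :=
  if p < i - k then p else if p < j then p + k
  else if p < j + k then p + i - j - k else p

def Xg (i j k q : ℕ) : ℕ :=
  if q < i - k then q else if q < i then q + j + k - i
  else if q < j + k then q - k else q

variable {n : ℕ}

def Xperm (n i j k : ℕ) (h1 : 1 ≤ k) (h2 : k ≤ i) (h3 : i ≤ j) (h4 : j + k ≤ n) :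
    Equiv.Perm (Fin n) where
  toFun := fun p => ⟨Xf i j k p, by
    have := p.isLt; unfold Xf; split_ifs <;> omega⟩
  invFun := fun q => ⟨Xg i j k q, by
    have := q.isLt; unfold Xg; split_ifs <;> omega⟩
  left_inv := by
    intro p
    ext
    show Xg i j k (Xf i j k ↑p) = ↑p
    have := p.isLt
    unfold Xf Xg
    split_ifs <;> omega
  right_inv := by
    intro q
    ext
    show Xf i j k (Xg i j k ↑q) = ↑q
    have := q.isLt
    unfold Xf Xg
    split_ifs <;> omega

lemma va_X {i j k : ℕ} (h1 : 1 ≤ k) (h2 : k ≤ i) (h3 : i ≤ j) (h4 : j + k ≤ n)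
    {p : ℕ} (hp : p < n) :
    va (Xperm n i j k h1 h2 h3 h4) p = Xf i j k p := by
  simp only [va, dif_pos hp]
  rfl

lemma va_X_inv {i j k : ℕ} (h1 : 1 ≤ k) (h2 : k ≤ i) (h3 : i ≤ j) (h4 : j + k ≤ n)
    {q : ℕ} (hq : q < n) :
    va (Xperm n i j k h1 h2 h3 h4)⁻¹ q = Xg i j k q := by
  simp only [va, dif_pos hq]
  rfl

lemma X_rightDescent {i j k : ℕ} (h1 : 1 ≤ k) (h2 : k ≤ i) (h3 : i ≤ j) (h4 : j + k ≤ n) :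
    IsRightDescent (Xperm n i j k h1 h2 h3 h4) j := by
  have hjn : j < n := by omega
  rw [rightDescent_iff _ j (by omega) hjn]
  rw [va_X h1 h2 h3 h4 hjn, va_X h1 h2 h3 h4 (by omega : j - 1 < n)]
  unfold Xf
  split_ifs <;> omega

lemma X_rightDescent_unique {i j k : ℕ} (h1 : 1 ≤ k) (h2 : k ≤ i) (h3 : i ≤ j)
    (h4 : j + k ≤ n) {m : ℕ} (hm : IsRightDescent (Xperm n i j k h1 h2 h3 h4) m) :
    m = j := by
  have hm1 := hm.1
  have hm2 := hm.2.1
  have hmn : m < n := by omega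
  rw [rightDescent_iff _ m hm1 hmn] at hm
  rw [va_X h1 h2 h3 h4 hmn, va_X h1 h2 h3 h4 (by omega : m - 1 < n)] at hm
  by_contra hne
  unfold Xf at hm
  split_ifs at hm <;> omega

lemma X_leftDescent {i j k : ℕ} (h1 : 1 ≤ k) (h2 : k ≤ i) (h3 : i ≤ j) (h4 : j + k ≤ n) :
    IsLeftDescent (Xperm n i j k h1 h2 h3 h4) i := by
  rw [leftDescent_iff_inv]
  have hin : i < n := by omega
  rw [rightDescent_iff _ i (by omega) hin]
  rw [va_X_inv h1 h2 h3 h4 hin, va_X_inv h1 h2 h3 h4 (by omega : i - 1 < n)]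
  unfold Xg
  split_ifs <;> omega

lemma X_leftDescent_unique {i j k : ℕ} (h1 : 1 ≤ k) (h2 : k ≤ i) (h3 : i ≤ j)
    (h4 : j + k ≤ n) {m : ℕ} (hm : IsLeftDescent (Xperm n i j k h1 h2 h3 h4) m) :
    m = i := by
  rw [leftDescent_iff_inv] at hm
  have hm1 := hm.1
  have hm2 := hm.2.1
  have hmn : m < n := by omega
  rw [rightDescent_iff _ m hm1 hmn] at hm
  rw [va_X_inv h1 h2 h3 h4 hmn, va_X_inv h1 h2 h3 h4 (by omega : m - 1 < n)] at hm
  by_contra hne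
  unfold Xg at hm
  split_ifs at hm <;> omega

lemma X_bigrassmannian {i j k : ℕ} (h1 : 1 ≤ k) (h2 : k ≤ i) (h3 : i ≤ j) (h4 : j + k ≤ n) :
    Bigrassmannian (Xperm n i j k h1 h2 h3 h4) :=
  ⟨⟨i, X_leftDescent h1 h2 h3 h4, fun m hm => X_leftDescent_unique h1 h2 h3 h4 hm⟩,
   ⟨j, X_rightDescent h1 h2 h3 h4, fun m hm => X_rightDescent_unique h1 h2 h3 h4 hm⟩⟩

end Part4
section Part5
variable {n : ℕ}

lemma va_va_inv (w : Equiv.Perm (Fin n)) {q : ℕ} (hq : q < n) :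
    va w (va w⁻¹ q) = q := by
  have := va_inv_va w⁻¹ hq
  rwa [inv_inv] at this

/-- monotonicity along a run (positions on the same side of the unique descent `J`). -/
lemma run_mono (z : Equiv.Perm (Fin n)) (J : ℕ)
    (hA : ∀ t, t + 1 < n → t + 1 ≠ J → va z t < va z (t + 1)) :
    ∀ q p, p < q → q < n → (q < J ∨ J ≤ p) → va z p < va z q := by
  intro q
  induction q with
  | zero => omega
  | succ q' ih =>
    intro p hpq hqn hside
    have hstep : va z q' < va z (q' + 1) := by
      apply hA q' hqn
      rcases hside with h | h
      · omega
      · omega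
    rcases Nat.lt_or_ge p q' with h | h
    · have := ih p h (by omega) (by rcases hside with h' | h' <;> omega)
      omega
    · have : p = q' := by omega
      rw [this]
      exact hstep

lemma run_lower (z : Equiv.Perm (Fin n)) (J : ℕ)
    (hA : ∀ t, t + 1 < n → t + 1 ≠ J → va z t < va z (t + 1)) (hJn : J < n) :
    ∀ p, p < J → p ≤ va z p := by
  intro p
  induction p with
  | zero => omega
  | succ p' ih =>
    intro hp
    have h1 := ih (by omega)
    have h2 := run_mono z J hA (p' + 1) p' (by omega) (by omega) (by omega)
    omega

lemma run_upper (z : Equiv.Perm (Fin n)) (J : ℕ)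
    (hA : ∀ t, t + 1 < n → t + 1 ≠ J → va z t < va z (t + 1)) :
    ∀ p, J ≤ p → p < n → va z p ≤ p := by
  intro p hJp hpn
  by_contra hcon
  push_neg at hcon
  -- then by induction upward va z q ≥ q + (q - p) +1 ... instead: induct on n - 1 - p
  -- downward: use that va z (n-1) ≤ n-1 and mono
  have key : ∀ d q, J ≤ q → q + d = n - 1 → q ≤ va z q → va z q + d < n := by
    intro d
    induction d with
    | zero => intro q _ hq hle; have := va_lt z (show q < n by omega); omega
    | succ d' ih =>
      intro q hJq hqd hle
      have hstep := run_mono z J hA (q + 1) q (by omega) (by omega) (by omega)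
      have := ih (q + 1) (by omega) (by omega) (by omega)
      omega
  have := key (n - 1 - p) p hJp (by have := va_lt z hpn; omega) (by omega)
  omega

lemma pos_lt_of_val_lt (z : Equiv.Perm (Fin n)) (J : ℕ)
    (hA : ∀ t, t + 1 < n → t + 1 ≠ J → va z t < va z (t + 1)) (hJn : J < n)
    {v : ℕ} (hv : v < va z J) : va z⁻¹ v < J := by
  have hvn : v < n := by have := va_lt z hJn; omega
  have hp : va z⁻¹ v < n := va_lt z⁻¹ hvn
  by_contra hcon
  push_neg at hcon
  rcases Nat.lt_or_ge J (va z⁻¹ v) with h | h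
  · have := run_mono z J hA (va z⁻¹ v) J h hp (by omega)
    rw [va_va_inv z hvn] at this
    omega
  · have heq : va z⁻¹ v = J := by omega
    have := va_va_inv z hvn
    rw [heq] at this
    omega

/-- the head value of the second run is less than the value-descent `I`. -/
lemma headval_lt (z : Equiv.Perm (Fin n)) (I J : ℕ)
    (hA : ∀ t, t + 1 < n → t + 1 ≠ J → va z t < va z (t + 1))
    (hB : ∀ t, t + 1 < n → t + 1 ≠ I → va z⁻¹ t < va z⁻¹ (t + 1))
    (hJn : J < n) (hI1 : 1 ≤ I) (hIn : I < n)
    (hE : va z⁻¹ I < va z⁻¹ (I - 1)) :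
    va z J < I := by
  set u0 := va z J with hu0
  by_contra hcon
  push_neg at hcon  -- I ≤ u0
  rcases Nat.lt_or_ge I u0 with h | h
  · have hp1 : va z⁻¹ (I - 1) < J := pos_lt_of_val_lt z J hA hJn (by omega)
    have hp2 : va z⁻¹ I < J := pos_lt_of_val_lt z J hA hJn (by omega)
    have := run_mono z J hA (va z⁻¹ (I - 1)) (va z⁻¹ I) hE (by omega) (by omega)
    rw [va_va_inv z (by omega : I - 1 < n), va_va_inv z hIn] at this
    omega
  · have heq : u0 = I := by omega
    have hposI : va z⁻¹ I = J := by
      rw [← heq, hu0, va_inv_va z hJn]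
    have hp1 : va z⁻¹ (I - 1) < J := pos_lt_of_val_lt z J hA hJn (by omega)
    omega

/-- low identity region. -/
lemma low_id (z : Equiv.Perm (Fin n)) (I J : ℕ)
    (hA : ∀ t, t + 1 < n → t + 1 ≠ J → va z t < va z (t + 1))
    (hB : ∀ t, t + 1 < n → t + 1 ≠ I → va z⁻¹ t < va z⁻¹ (t + 1))
    (hJn : J < n) (hIn : I < n) (hu0I : va z J < I) :
    ∀ p, p < va z J → va z p = p := by
  intro p hp
  have hpJ : p < J := by
    have := run_upper z J hA J le_rfl hJn
    omega
  have hpn : p < n := by omega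
  have ha : p ≤ va z p := run_lower z J hA hJn p hpJ
  have hb : p ≤ va z⁻¹ p := run_lower z⁻¹ I hB hIn p (by omega)
  by_contra hcon
  have hpos : p < va z⁻¹ p := by
    rcases Nat.lt_or_ge p (va z⁻¹ p) with h | h
    · exact h
    · have heq : va z⁻¹ p = p := by omega
      have := va_va_inv z hpn
      rw [heq] at this
      exact absurd this hcon
  have hposJ : va z⁻¹ p < J := pos_lt_of_val_lt z J hA hJn (by omega)
  have := run_mono z J hA (va z⁻¹ p) p hpos (by omega) (by omega)
  rw [va_va_inv z hpn] at this
  omega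

/-- middle block. -/
lemma middle_block (z : Equiv.Perm (Fin n)) (I J : ℕ)
    (hA : ∀ t, t + 1 < n → t + 1 ≠ J → va z t < va z (t + 1))
    (hB : ∀ t, t + 1 < n → t + 1 ≠ I → va z⁻¹ t < va z⁻¹ (t + 1))
    (hJn : J < n) (hIn : I < n)
    (hbase : va z (va z J) = I) :
    ∀ t, va z J + t < J → va z (va z J + t) = I + t := by
  set u0 := va z J with hu0
  intro t
  induction t with
  | zero => intro _; simpa using hbase
  | succ t' ih =>
    intro ht
    have ihv : va z (u0 + t') = I + t' := ih (by omega)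
    have hs1 : va z (u0 + t') < va z (u0 + t' + 1) :=
      run_mono z J hA (u0 + t' + 1) (u0 + t') (by omega) (by omega) (by omega)
    set V := va z (u0 + t' + 1) with hV
    have hVn : V < n := va_lt z (by omega)
    have hVlb : I + t' + 1 ≤ V := by omega
    by_contra hcon
    have hVgt : I + t' + 1 < V := by
      rcases Nat.lt_or_ge (I + t' + 1) V with h | h
      · exact h
      · have : V = I + t' + 1 := by omega
        rw [show u0 + (t' + 1) = u0 + t' + 1 by omega] at hcon
        exact absurd this hcon
    have hItn : I + t' + 1 < n := by omega
    -- position of value I + t' + 1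
    have hposIt : va z⁻¹ (I + t') = u0 + t' := by
      rw [← ihv, va_inv_va z (by omega)]
    have hmono1 : va z⁻¹ (I + t') < va z⁻¹ (I + t' + 1) :=
      run_mono z⁻¹ I hB (I + t' + 1) (I + t') (by omega) hItn (by omega)
    have hposV : va z⁻¹ V = u0 + t' + 1 := by
      rw [hV, va_inv_va z (by omega)]
    have hne : va z⁻¹ (I + t' + 1) ≠ u0 + t' + 1 := by
      intro e
      have := va_va_inv z hItn
      rw [e] at this
      omega
    have hmono2 : va z⁻¹ (I + t' + 1) < va z⁻¹ V :=
      run_mono z⁻¹ I hB V (I + t' + 1) hVgt hVn (by omega)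
    omega

end Part5
section Part6
variable {n : ℕ}

lemma perm_eq_of_va (z w : Equiv.Perm (Fin n)) (h : ∀ p, p < n → va z p = va w p) :
    z = w := by
  apply Equiv.ext
  intro x
  have := h x.val x.isLt
  simp only [va, dif_pos x.isLt, Fin.eta] at this
  exact Fin.ext this

lemma classify (z : Equiv.Perm (Fin n)) (i j : ℕ) (hij : i ≤ j)
    (hbgL : ∃! m, IsLeftDescent z m) (hbgR : ∃! m, IsRightDescent z m)
    (hL : IsLeftDescent z i) (hR : IsRightDescent z j) :
    ∃ (k : ℕ) (h1 : 1 ≤ k) (h2 : k ≤ i) (h4 : j + k ≤ n),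
      z = Xperm n i j k h1 h2 hij h4 := by
  have hRu : ∀ m, IsRightDescent z m → m = j := by
    intro m hm
    obtain ⟨m0, hm0, hmu⟩ := hbgR
    exact (hmu m hm).trans (hmu j hR).symm
  have hLu : ∀ m, IsLeftDescent z m → m = i := by
    intro m hm
    obtain ⟨m0, hm0, hmu⟩ := hbgL
    exact (hmu m hm).trans (hmu i hL).symm
  have hj1 : 1 ≤ j := hR.1
  have hjn1 : j ≤ n - 1 := hR.2.1
  have hi1 : 1 ≤ i := hL.1
  have hjn : j < n := by omega
  have hin : i < n := by omega
  have hA : ∀ t, t + 1 < n → t + 1 ≠ j → va z t < va z (t + 1) := by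
    intro t h1 h2
    have := notRightDescent_asc z (t + 1) (by omega) h1 (fun hd => h2 (hRu _ hd))
    simpa using this
  have hB : ∀ t, t + 1 < n → t + 1 ≠ i → va z⁻¹ t < va z⁻¹ (t + 1) := by
    intro t h1 h2
    have := notRightDescent_asc z⁻¹ (t + 1) (by omega) h1
      (fun hd => h2 (hLu _ ((leftDescent_iff_inv z (t + 1)).mpr hd)))
    simpa using this
  have hD : va z j < va z (j - 1) := (rightDescent_iff z j hj1 hjn).mp hR
  have hE : va z⁻¹ i < va z⁻¹ (i - 1) :=
    (rightDescent_iff z⁻¹ i hi1 hin).mp ((leftDescent_iff_inv z i).mp hL)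
  have hA' : ∀ t, t + 1 < n → t + 1 ≠ j → va (z⁻¹)⁻¹ t < va (z⁻¹)⁻¹ (t + 1) := by
    simpa only [inv_inv] using hA
  have hE' : va (z⁻¹)⁻¹ j < va (z⁻¹)⁻¹ (j - 1) := by
    simpa only [inv_inv] using hD
  set u0 := va z j with hu0def
  have hu0n : u0 < n := va_lt z hjn
  have G1 : u0 < i := headval_lt z i j hA hB hjn hi1 hin hE
  set u0' := va z⁻¹ i with hu0'def
  have G1' : u0' < j := headval_lt z⁻¹ j i hB hA' hin hj1 hjn hE'
  have G2 : ∀ p, p < u0 → va z p = p := low_id z i j hA hB hjn hin G1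
  have G2' : ∀ p, p < u0' → va z⁻¹ p = p := low_id z⁻¹ j i hB hA' hin hjn G1'
  have hvaU0' : va z u0' = i := va_va_inv z hin
  have hvaU0 : va z⁻¹ u0 = j := va_inv_va z hjn
  have hu0eq : u0 = u0' := by
    rcases Nat.lt_trichotomy u0 u0' with h | h | h
    · have := G2' u0 h
      omega
    · exact h
    · have := G2 u0' h
      omega
  have hbase : va z u0 = i := by rw [hu0eq]; exact hvaU0'
  have hbase' : va z⁻¹ u0 = j := hvaU0
  have hbaseinv : va z⁻¹ (va z⁻¹ i) = j := by
    rw [← hu0'def, ← hu0eq]; exact hbase'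
  set k := i - u0 with hkdef
  have hk1 : 1 ≤ k := by omega
  have hk2 : k ≤ i := by omega
  have G4 : ∀ t, u0 + t < j → va z (u0 + t) = i + t := by
    have := middle_block z i j hA hB hjn hin hbase
    simpa only [← hu0def] using this
  have G4' : ∀ t, u0 + t < i → va z⁻¹ (u0 + t) = j + t := by
    have := middle_block z⁻¹ j i hB hA' hin hjn
      (by rw [show va z⁻¹ i = u0 from (hu0eq ▸ hu0'def.symm : va z⁻¹ i = u0)]; exact hbase')
    intro t ht
    have h2 := this t (by rw [show va z⁻¹ i = u0 from (hu0eq ▸ hu0'def.symm : va z⁻¹ i = u0)]; omega)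
    rw [show va z⁻¹ i = u0 from (hu0eq ▸ hu0'def.symm : va z⁻¹ i = u0)] at h2
    simpa only [inv_inv] using h2
  have third : ∀ t, t < k → va z (j + t) = u0 + t := by
    intro t ht
    have := G4' t (by omega)
    have h2 : va z (va z⁻¹ (u0 + t)) = u0 + t := va_va_inv z (by omega)
    rw [this] at h2
    exact h2
  have hbound : j + k ≤ n := by
    have := G4' (k - 1) (by omega)
    have h2 : va z⁻¹ (u0 + (k - 1)) < n := va_lt z⁻¹ (by omega)
    omega
  have hub : ∀ p, j ≤ p → p < n → va z p ≤ p := run_upper z j hA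
  have hlb2 : ∀ p, j + k ≤ p → p < n → j + k ≤ va z p := by
    intro p hp hpn
    by_contra hcon
    push_neg at hcon
    set V := va z p with hV
    have hVn : V < n := by rw [hV]; exact va_lt z hpn
    have hVp : va z⁻¹ V = p := va_inv_va z hpn
    rcases Nat.lt_or_ge V u0 with h | h
    · have h3 := G2 V h
      have h4 : va z⁻¹ (va z V) = V := va_inv_va z hVn
      rw [h3] at h4
      omega
    · rcases Nat.lt_or_ge V i with h2 | h2
      · have h3 := third (V - u0) (by omega)
        rw [show u0 + (V - u0) = V by omega] at h3
        have h4 : va z⁻¹ (va z (j + (V - u0))) = j + (V - u0) := va_inv_va z (by omega)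
        rw [h3] at h4
        omega
      · have h3 := G4 (V - i) (by omega)
        rw [show i + (V - i) = V by omega] at h3
        have h4 : va z⁻¹ (va z (u0 + (V - i))) = u0 + (V - i) := va_inv_va z (by omega)
        rw [h3] at h4
        omega
  have tailEq : ∀ d, j + k + d < n → va z (j + k + d) = j + k + d := by
    intro d
    induction d with
    | zero =>
      intro hd
      have h1 := hub (j + k) (by omega) (by omega)
      have h2 := hlb2 (j + k) le_rfl (by omega)
      simp only [Nat.add_zero]
      omega
    | succ d' ih =>
      intro hd
      have h1 := ih (by omega)
      have h2 := run_mono z j hA (j + k + (d' + 1)) (j + k + d') (by omega) (by omega) (by omega)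
      have h3 := hub (j + k + (d' + 1)) (by omega) (by omega)
      omega
  refine ⟨k, hk1, hk2, hbound, ?_⟩
  apply perm_eq_of_va
  intro p hp
  rw [va_X hk1 hk2 hij hbound hp]
  unfold Xf
  have hik : i - k = u0 := by omega
  split_ifs with c1 c2 c3
  · exact G2 p (by omega)
  · have := G4 (p - u0) (by omega)
    rw [show u0 + (p - u0) = p by omega] at this
    omega
  · have := third (p - j) (by omega)
    rw [show j + (p - j) = p by omega] at this
    omega
  · have := tailEq (p - (j + k)) (by omega)
    rw [show j + k + (p - (j + k)) = p by omega] at this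
    omega

end Part6
section Part7
variable {n : ℕ}

lemma bubbleLeft : ∀ (d : ℕ) (u v : Equiv.Perm (Fin n)) (p : ℕ), p + d < n →
    (∀ m, m < n → (m < p ∨ p + d < m) → va v m = va u m) →
    (va v p = va u (p + d)) →
    (∀ m, p ≤ m → m < p + d → va v (m + 1) = va u m) →
    (∀ m, p ≤ m → m < p + d → va u m < va u (p + d)) →
    BruhatLE u v := by
  intro d
  induction d with
  | zero =>
    intro u v p hpn h1 h2 h3 h4
    have : v = u := by
      apply perm_eq_of_va
      intro m hm
      rcases Nat.lt_trichotomy m p with h | h | h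
      · exact h1 m hm (Or.inl h)
      · rw [h]; simpa using h2
      · exact h1 m hm (Or.inr (by omega))
    rw [this]
    exact Relation.ReflTransGen.refl
  | succ d ih =>
    intro u v p hpn h1 h2 h3 h4
    set t := p + d with htdef
    have htn : t < n := by omega
    have ht1n : t + 1 < n := by omega
    set A : Fin n := ⟨t, htn⟩ with hA
    set B : Fin n := ⟨t + 1, ht1n⟩ with hB
    have hab : (A : ℕ) + 1 = (B : ℕ) := rfl
    have hasc : u A < u B := by
      rw [va_fin_lt u htn ht1n]
      exact h4 t (by omega) (by omega)
    set u1 := u * Equiv.swap A B with hu1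
    have hstep : BruhatStep u u1 := bruhatStep_adjSwap u hab hasc
    have e1 : va u1 t = va u (t + 1) := va_mul_swap_left u A B
    have e2 : va u1 (t + 1) = va u t := va_mul_swap_right u A B
    have e3 : ∀ m, m ≠ t → m ≠ t + 1 → va u1 m = va u m := fun m hm1 hm2 =>
      va_mul_swap_other u A B hm1 hm2
    have hrest : BruhatLE u1 v := by
      apply ih u1 v p (by omega)
      · intro m hm hside
        rcases hside with h | h
        · rw [h1 m hm (Or.inl h), e3 m (by omega) (by omega)]
        · rcases Nat.lt_or_ge (t + 1) m with h' | h'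
          · rw [h1 m hm (Or.inr (by omega)), e3 m (by omega) (by omega)]
          · have hmeq : m = t + 1 := by omega
            rw [hmeq, e2]
            exact h3 t (by omega) (by omega)
      · rw [e1]
        rw [show t + 1 = p + (d + 1) by omega]
        exact h2
      · intro m hm1 hm2
        rw [e3 m (by omega) (by omega)]
        exact h3 m hm1 (by omega)
      · intro m hm1 hm2
        rw [e3 m (by omega) (by omega), e1]
        have r1 := h4 m hm1 (by omega)
        have r2 := h4 t (by omega) (by omega)
        have r3 : va u m ≠ va u (t + 1) := fun e => by
          have := va_inj u (by omega) ht1n e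
          omega
        rw [show p + (d + 1) = t + 1 by omega] at r1 r2
        omega
    exact Relation.ReflTransGen.head hstep hrest

lemma bubbleRight : ∀ (d : ℕ) (u v : Equiv.Perm (Fin n)) (p : ℕ), p + d < n →
    (∀ m, m < n → (m < p ∨ p + d < m) → va v m = va u m) →
    (va v (p + d) = va u p) →
    (∀ m, p ≤ m → m < p + d → va v m = va u (m + 1)) →
    (∀ m, p < m → m ≤ p + d → va u p < va u m) →
    BruhatLE u v := by
  intro d
  induction d with
  | zero =>
    intro u v p hpn h1 h2 h3 h4
    have : v = u := by
      apply perm_eq_of_va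
      intro m hm
      rcases Nat.lt_trichotomy m p with h | h | h
      · exact h1 m hm (Or.inl h)
      · rw [h]; simpa using h2
      · exact h1 m hm (Or.inr (by omega))
    rw [this]
    exact Relation.ReflTransGen.refl
  | succ d ih =>
    intro u v p hpn h1 h2 h3 h4
    have hpn' : p < n := by omega
    have hp1n : p + 1 < n := by omega
    set A : Fin n := ⟨p, hpn'⟩ with hA
    set B : Fin n := ⟨p + 1, hp1n⟩ with hB
    have hab : (A : ℕ) + 1 = (B : ℕ) := rfl
    have hasc : u A < u B := by
      rw [va_fin_lt u hpn' hp1n]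
      exact h4 (p + 1) (by omega) (by omega)
    set u1 := u * Equiv.swap A B with hu1
    have hstep : BruhatStep u u1 := bruhatStep_adjSwap u hab hasc
    have e1 : va u1 p = va u (p + 1) := va_mul_swap_left u A B
    have e2 : va u1 (p + 1) = va u p := va_mul_swap_right u A B
    have e3 : ∀ m, m ≠ p → m ≠ p + 1 → va u1 m = va u m := fun m hm1 hm2 =>
      va_mul_swap_other u A B hm1 hm2
    have hrest : BruhatLE u1 v := by
      apply ih u1 v (p + 1) (by omega)
      · intro m hm hside
        rcases hside with h | h
        · rcases Nat.lt_or_ge m p with h' | h'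
          · rw [h1 m hm (Or.inl h'), e3 m (by omega) (by omega)]
          · have hmeq : m = p := by omega
            rw [hmeq, e1]
            exact h3 p (by omega) (by omega)
        · rw [h1 m hm (Or.inr (by omega)), e3 m (by omega) (by omega)]
      · rw [e2]
        rw [show p + 1 + d = p + (d + 1) by omega]
        exact h2
      · intro m hm1 hm2
        rw [e3 (m + 1) (by omega) (by omega)]
        exact h3 m (by omega) (by omega)
      · intro m hm1 hm2
        rw [e2, e3 m (by omega) (by omega)]
        exact h4 m (by omega) (by omega)
    exact Relation.ReflTransGen.head hstep hrest

lemma phaseA {i j k : ℕ} (h1 : 1 ≤ k) (h2 : k ≤ i) (h3 : i ≤ j) (h4 : j + k ≤ n)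
    (h4' : j + 1 + k ≤ n) :
    BruhatLE (Xperm n i j k h1 h2 h3 h4)
      (Xperm n i (j + 1) k h1 h2 (by omega) h4') := by
  apply bubbleLeft k _ _ j (by omega)
  · intro m hm hside
    rw [va_X h1 h2 (by omega) h4' hm, va_X h1 h2 h3 h4 hm]
    unfold Xf
    split_ifs <;> omega
  · rw [va_X h1 h2 (by omega) h4' (by omega), va_X h1 h2 h3 h4 (by omega)]
    unfold Xf
    split_ifs <;> omega
  · intro m hm1 hm2
    rw [va_X h1 h2 (by omega) h4' (by omega), va_X h1 h2 h3 h4 (by omega)]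
    unfold Xf
    split_ifs <;> omega
  · intro m hm1 hm2
    rw [va_X h1 h2 h3 h4 (by omega), va_X h1 h2 h3 h4 (by omega)]
    unfold Xf
    split_ifs <;> omega

lemma phaseB {i j k : ℕ} (h1 : 1 ≤ k) (h2 : k ≤ i) (h3 : i ≤ j) (h4' : j + 1 + k ≤ n)
    (hk : k + 1 ≤ i) :
    BruhatLE (Xperm n i (j + 1) k h1 h2 (by omega) h4')
      (Xperm n i j (k + 1) (by omega) hk h3 (by omega)) := by
  apply bubbleRight (j - i + k + 1) _ _ (i - k - 1) (by omega)
  · intro m hm hside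
    rw [va_X (by omega) hk h3 (by omega) hm, va_X h1 h2 (by omega) h4' hm]
    unfold Xf
    split_ifs <;> omega
  · rw [va_X (by omega) hk h3 (by omega) (by omega), va_X h1 h2 (by omega) h4' (by omega)]
    rw [show i - k - 1 + (j - i + k + 1) = j by omega]
    unfold Xf
    split_ifs <;> omega
  · intro m hm1 hm2
    rw [va_X (by omega) hk h3 (by omega) (by omega), va_X h1 h2 (by omega) h4' (by omega)]
    unfold Xf
    split_ifs <;> omega
  · intro m hm1 hm2
    rw [va_X h1 h2 (by omega) h4' (by omega), va_X h1 h2 (by omega) h4' (by omega)]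
    unfold Xf
    split_ifs <;> omega

lemma X_le_succ {i j k : ℕ} (h1 : 1 ≤ k) (h3 : i ≤ j) (hk : k + 1 ≤ i)
    (hb : j + (k + 1) ≤ n) :
    BruhatLE (Xperm n i j k h1 (by omega) h3 (by omega))
      (Xperm n i j (k + 1) (by omega) hk h3 hb) := by
  have ha := phaseA (n := n) h1 (by omega : k ≤ i) h3 (by omega : j + k ≤ n)
    (by omega : j + 1 + k ≤ n)
  have hbb := phaseB (n := n) h1 (by omega : k ≤ i) h3 (by omega : j + 1 + k ≤ n) hk
  exact Relation.ReflTransGen.trans ha hbb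

lemma X_chain {i j : ℕ} (h3 : i ≤ j) : ∀ (k k' : ℕ) (hkk : k ≤ k') (h1 : 1 ≤ k)
    (hk' : k' ≤ i) (hb : j + k' ≤ n),
    BruhatLE (Xperm n i j k h1 (by omega) h3 (by omega))
      (Xperm n i j k' (by omega) hk' h3 hb) := by
  intro k k' hkk
  induction k' with
  | zero => intro h1 hk' hb; omega
  | succ m ih =>
    intro h1 hk' hb
    rcases Nat.lt_or_ge k (m + 1) with h | h
    · have hle1 := ih (by omega) h1 (by omega) (by omega)
      have hle2 := X_le_succ (n := n) (by omega : 1 ≤ m) h3 hk' hb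
      exact Relation.ReflTransGen.trans hle1 hle2
    · have : k = m + 1 := by omega
      subst this
      exact Relation.ReflTransGen.refl
end Part7
section Part8
variable {n : ℕ}

lemma bigrassmannian_inv (w : Equiv.Perm (Fin n)) (h : Bigrassmannian w) :
    Bigrassmannian w⁻¹ := by
  obtain ⟨⟨a, ha, hau⟩, ⟨b, hb, hbu⟩⟩ := h
  constructor
  · refine ⟨b, ?_, ?_⟩
    · show IsLeftDescent w⁻¹ b
      rw [leftDescent_iff_inv, inv_inv]
      exact hb
    · intro m hm
      have hm' : IsLeftDescent w⁻¹ m := hm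
      rw [leftDescent_iff_inv, inv_inv] at hm'
      exact hbu m hm'
  · refine ⟨a, ?_, ?_⟩
    · show IsRightDescent w⁻¹ a
      exact (leftDescent_iff_inv w a).mp ha
    · intro m hm
      exact hau m ((leftDescent_iff_inv w m).mpr hm)

lemma main_direct (i j : ℕ) (hij : i ≤ j)
    (x y : Equiv.Perm (Fin n))
    (hx : Bigrassmannian x ∧ IsLeftDescent x i ∧ IsRightDescent x j)
    (hy : Bigrassmannian y ∧ IsLeftDescent y i ∧ IsRightDescent y j)
    (hxy : BruhatLT x y) :
    ∃ w : Equiv.Perm (Fin n), Bigrassmannian w ∧ IsRightDescent w (j + 1) ∧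
      BruhatLT x w ∧ BruhatLT w y := by
  obtain ⟨kx, hx1, hx2, hx4, hxeq⟩ :=
    classify x i j hij hx.1.1 hx.1.2 hx.2.1 hx.2.2
  obtain ⟨ky, hy1, hy2, hy4, hyeq⟩ :=
    classify y i j hij hy.1.1 hy.1.2 hy.2.1 hy.2.2
  have hlen := bruhatLT_len_lt hxy
  have hkk : kx < ky := by
    rcases Nat.lt_trichotomy kx ky with h | h | h
    · exact h
    · exfalso
      apply hxy.2
      rw [hxeq, hyeq]
      subst h
      rfl
    · exfalso
      have hle : BruhatLE y x := by
        rw [hxeq, hyeq]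
        exact X_chain hij ky kx (by omega) hy1 hx2 hx4
      have := bruhatLE_len_le hle
      omega
  have hb' : j + 1 + kx ≤ n := by omega
  have hkxi : kx + 1 ≤ i := by omega
  refine ⟨Xperm n i (j + 1) kx hx1 hx2 (by omega) hb', ?_, ?_, ⟨?_, ?_⟩, ⟨?_, ?_⟩⟩
  · exact X_bigrassmannian hx1 hx2 (by omega) hb'
  · exact X_rightDescent hx1 hx2 (by omega) hb'
  · rw [hxeq]
    exact phaseA hx1 hx2 hij hx4 hb'
  · intro e
    have hjn : j < n := by omega
    have hval : va x j = va (Xperm n i (j + 1) kx hx1 hx2 (by omega) hb') j := by rw [e]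
    rw [hxeq, va_X hx1 hx2 hij hx4 hjn] at hval
    rw [va_X hx1 hx2 (by omega) hb' hjn] at hval
    unfold Xf at hval
    split_ifs at hval <;> omega
  · have hstep1 : BruhatLE (Xperm n i (j + 1) kx hx1 hx2 (by omega) hb')
        (Xperm n i j (kx + 1) (by omega) hkxi hij (by omega)) :=
      phaseB hx1 hx2 hij hb' hkxi
    have hstep2 : BruhatLE (Xperm n i j (kx + 1) (by omega) hkxi hij (by omega))
        (Xperm n i j ky (by omega) hy2 hij hy4) :=
      X_chain hij (kx + 1) ky (by omega) (by omega) hy2 hy4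
    rw [hyeq]
    exact Relation.ReflTransGen.trans hstep1 hstep2
  · intro e
    have hjn : j < n := by omega
    have hval : va (Xperm n i (j + 1) kx hx1 hx2 (by omega) hb') j = va y j := by rw [e]
    rw [hyeq, va_X hy1 hy2 hij hy4 hjn] at hval
    rw [va_X hx1 hx2 (by omega) hb' hjn] at hval
    unfold Xf at hval
    split_ifs at hval <;> omega

end Part8

theorem stmt3 (n : ℕ) (hn : 2 ≤ n) (i j : ℕ)
    (hi1 : 1 ≤ i) (hi2 : i ≤ n - 1) (hj1 : 1 ≤ j) (hj2 : j ≤ n - 1)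
    (x y : Equiv.Perm (Fin n))
    (hx : Bigrassmannian x ∧ IsLeftDescent x i ∧ IsRightDescent x j)
    (hy : Bigrassmannian y ∧ IsLeftDescent y i ∧ IsRightDescent y j)
    (hxy : BruhatLT x y) :
    ∃ w : Equiv.Perm (Fin n), Bigrassmannian w ∧
      ¬(IsLeftDescent w i ∧ IsRightDescent w j) ∧
      BruhatLT x w ∧ BruhatLT w y := by
  rcases le_or_gt i j with hij | hij
  · obtain ⟨w, hwbg, hwrd, hxw, hwy⟩ := main_direct i j hij x y hx hy hxy
    refine ⟨w, hwbg, ?_, hxw, hwy⟩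
    intro ⟨_, hRj⟩
    obtain ⟨b, hb, hbu⟩ := hwbg.2
    have e1 := hbu j hRj
    have e2 := hbu (j + 1) hwrd
    omega
  · -- j < i : pass to inverses
    have hx' : Bigrassmannian x⁻¹ ∧ IsLeftDescent x⁻¹ j ∧ IsRightDescent x⁻¹ i := by
      refine ⟨bigrassmannian_inv x hx.1, ?_, ?_⟩
      · rw [leftDescent_iff_inv, inv_inv]
        exact hx.2.2
      · exact (leftDescent_iff_inv x i).mp hx.2.1
    have hy' : Bigrassmannian y⁻¹ ∧ IsLeftDescent y⁻¹ j ∧ IsRightDescent y⁻¹ i := by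
      refine ⟨bigrassmannian_inv y hy.1, ?_, ?_⟩
      · rw [leftDescent_iff_inv, inv_inv]
        exact hy.2.2
      · exact (leftDescent_iff_inv y i).mp hy.2.1
    obtain ⟨w', hwbg, hwrd, hxw, hwy⟩ :=
      main_direct j i (by omega) x⁻¹ y⁻¹ hx' hy' (bruhatLT_inv hxy)
    refine ⟨w'⁻¹, bigrassmannian_inv w' hwbg, ?_, ?_, ?_⟩
    · intro ⟨hLi, _⟩
      have hRi : IsRightDescent w' i := by
        rw [leftDescent_iff_inv] at hLi
        rwa [inv_inv] at hLi
      obtain ⟨b, hb, hbu⟩ := hwbg.2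
      have e1 := hbu i hRi
      have e2 := hbu (i + 1) hwrd
      omega
    · have := bruhatLT_inv hxw
      rwa [inv_inv] at this
    · have := bruhatLT_inv hwy
      rwa [inv_inv] at this

end Paper
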